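/- Let A = (A_1, …, A_N) be an N-tuple of bounded operators on a Hilbert space X such that ζA := Σ ζ_k A_k is a contraction for every ζ ∈ 𝕋^N. Then A is completely non-unitary in the pencil sense (there is no nonzero closed subspace of X reducing all A_k on which ζA is unitary for every ζ ∈ 𝕋^N) if and only if the associated conservative system α with these main operators is closely connected (X_cc = X), provided α = (N; A, B, C, D; X, U, Y) is a conservative scattering system. -/

import Mathlib

noncomputable section

open scoped ComplexConjugate

/-- A bundled separable complex Hilbert space. -/
structure HilbertSp : Type 1 where
  carrier : Type
  [iN : NormedAddCommGroup carrier]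
  [iI : InnerProductSpace ℂ carrier]
  [iC : CompleteSpace carrier]
  [iS : TopologicalSpace.SeparableSpace carrier]

attribute [instance] HilbertSp.iN HilbertSp.iI HilbertSp.iC HilbertSp.iS

variable {N : ℕ}

/-- The linear pencil `z ↦ Σₖ z_k T_k` associated with an `N`-tuple of operators. -/
def pencil {E F : Type*} [NormedAddCommGroup E] [NormedAddCommGroup F]
    [NormedSpace ℂ E] [NormedSpace ℂ F]
    (T : Fin N → (E →L[ℂ] F)) (z : Fin N → ℂ) : E →L[ℂ] F := ∑ k, z k • T k

/-- membership in the unit torus `𝕋^N` -/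
def onTorus (ζ : Fin N → ℂ) : Prop := ∀ k, ‖ζ k‖ = 1

/-- membership in the open unit polydisk `𝔻^N` -/
def inPolydisk (z : Fin N → ℂ) : Prop := ∀ k, ‖z k‖ < 1

/-- `θ` has a zero of multiplicity `m` at `z = 0`: it is holomorphic near `0` and the
homogeneous terms of its Taylor expansion of degree `< m` vanish while that of degree `m`
does not. -/
def HasZeroOfOrder {U Y : Type*} [NormedAddCommGroup U] [NormedAddCommGroup Y]
    [NormedSpace ℂ U] [NormedSpace ℂ Y]
    (θ : (Fin N → ℂ) → (U →L[ℂ] Y)) (m : ℕ) : Prop :=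
  ∃ p : FormalMultilinearSeries ℂ (Fin N → ℂ) (U →L[ℂ] Y),
    HasFPowerSeriesAt θ p 0 ∧ (∀ j, j < m → ∀ z : Fin N → ℂ, (p j) (fun _ => z) = 0) ∧
      (∃ z : Fin N → ℂ, (p m) (fun _ => z) ≠ 0)

/-- The product `(zL⁽¹⁾)(zL⁽²⁾)⋯(zL⁽ᵐ⁾) : Ysp m → Ysp 0` of linear pencils along a chain of
spaces, where `L j k : Ysp (j+1) → Ysp j` plays the role of `L_k^{(j+1)}`. -/
def chainMul {Ysp : ℕ → Type*} [∀ j, NormedAddCommGroup (Ysp j)] [∀ j, NormedSpace ℂ (Ysp j)]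
    (L : (j : ℕ) → Fin N → (Ysp (j + 1) →L[ℂ] Ysp j)) (z : Fin N → ℂ) :
    (m : ℕ) → (Ysp m →L[ℂ] Ysp 0)
  | 0 => ContinuousLinearMap.id ℂ (Ysp 0)
  | (m + 1) => (chainMul L z m).comp (pencil (L m) z)

/-- The product `(zR⁽ᵐ⁾)⋯(zR⁽¹⁾) : Usp 0 → Usp m` of linear pencils along a chain of
spaces, where `R j k : Usp j → Usp (j+1)` plays the role of `R_k^{(j+1)}`. -/
def chainMulR {Usp : ℕ → Type*} [∀ j, NormedAddCommGroup (Usp j)] [∀ j, NormedSpace ℂ (Usp j)]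
    (R : (j : ℕ) → Fin N → (Usp j →L[ℂ] Usp (j + 1))) (z : Fin N → ℂ) :
    (m : ℕ) → (Usp 0 →L[ℂ] Usp m)
  | 0 => ContinuousLinearMap.id ℂ (Usp 0)
  | (m + 1) => (pencil (R m) z).comp (chainMulR R z m)

/-- the Hilbert space direct sum `E ⊕ F` -/
abbrev hS (E F : Type*) := WithLp 2 (E × F)

section blocks

variable (E F : Type*) [NormedAddCommGroup E] [NormedAddCommGroup F]
  [NormedSpace ℂ E] [NormedSpace ℂ F]

/-- inclusion of the first summand -/
def inlL : E →L[ℂ] hS E F :=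
  ((WithLp.prodContinuousLinearEquiv 2 ℂ E F).symm : E × F →L[ℂ] hS E F).comp
    (ContinuousLinearMap.inl ℂ E F)

/-- inclusion of the second summand -/
def inrL : F →L[ℂ] hS E F :=
  ((WithLp.prodContinuousLinearEquiv 2 ℂ E F).symm : E × F →L[ℂ] hS E F).comp
    (ContinuousLinearMap.inr ℂ E F)

/-- projection onto the first summand -/
def fstL : hS E F →L[ℂ] E :=
  (ContinuousLinearMap.fst ℂ E F).comp
    (WithLp.prodContinuousLinearEquiv 2 ℂ E F : hS E F →L[ℂ] E × F)

/-- projection onto the second summand -/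
def sndL : hS E F →L[ℂ] F :=
  (ContinuousLinearMap.snd ℂ E F).comp
    (WithLp.prodContinuousLinearEquiv 2 ℂ E F : hS E F →L[ℂ] E × F)

end blocks

/-- the block operator `[[A,B],[C,D]] : X ⊕ U → X' ⊕ Y'` -/
def block2 {X U X' Y' : Type*} [NormedAddCommGroup X] [NormedAddCommGroup U]
    [NormedAddCommGroup X'] [NormedAddCommGroup Y']
    [NormedSpace ℂ X] [NormedSpace ℂ U] [NormedSpace ℂ X'] [NormedSpace ℂ Y']
    (A : X →L[ℂ] X') (B : U →L[ℂ] X') (C : X →L[ℂ] Y') (D : U →L[ℂ] Y') :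
    hS X U →L[ℂ] hS X' Y' :=
  (inlL X' Y').comp (A.comp (fstL X U)) + (inlL X' Y').comp (B.comp (sndL X U)) +
    (inrL X' Y').comp (C.comp (fstL X U)) + (inrL X' Y').comp (D.comp (sndL X U))

/-- the transfer function `θ_α(z) = zD + zC (1 - zA)⁻¹ zB` of the system
`α = (N; A, B, C, D; X, U, Y)` -/
def transfer {X U Y : Type*} [NormedAddCommGroup X] [NormedAddCommGroup U] [NormedAddCommGroup Y]
    [NormedSpace ℂ X] [NormedSpace ℂ U] [NormedSpace ℂ Y]
    (A : Fin N → (X →L[ℂ] X)) (B : Fin N → (U →L[ℂ] X)) (C : Fin N → (X →L[ℂ] Y))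
    (D : Fin N → (U →L[ℂ] Y)) (z : Fin N → ℂ) : U →L[ℂ] Y :=
  pencil D z + (pencil C z).comp ((Ring.inverse (1 - pencil A z)).comp (pencil B z))

/-- unitarity of a bounded operator between Hilbert spaces -/
def IsUnitaryOp {E F : Type*} [NormedAddCommGroup E] [InnerProductSpace ℂ E] [CompleteSpace E]
    [NormedAddCommGroup F] [InnerProductSpace ℂ F] [CompleteSpace F] (W : E →L[ℂ] F) : Prop :=
  (ContinuousLinearMap.adjoint W).comp W = 1 ∧ W.comp (ContinuousLinearMap.adjoint W) = 1

/-- the block operator `G_α` of a system, as an `N`-tuple -/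
def sysBlock {X U Y : Type*} [NormedAddCommGroup X] [NormedAddCommGroup U] [NormedAddCommGroup Y]
    [NormedSpace ℂ X] [NormedSpace ℂ U] [NormedSpace ℂ Y]
    (A : Fin N → (X →L[ℂ] X)) (B : Fin N → (U →L[ℂ] X)) (C : Fin N → (X →L[ℂ] Y))
    (D : Fin N → (U →L[ℂ] Y)) : Fin N → (hS X U →L[ℂ] hS X Y) :=
  fun k => block2 (A k) (B k) (C k) (D k)

/-- `α` is a conservative scattering system: `ζ G_α` is unitary for every `ζ ∈ 𝕋^N`. -/
def Conservative {X U Y : Type*} [NormedAddCommGroup X] [InnerProductSpace ℂ X] [CompleteSpace X]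
    [NormedAddCommGroup U] [InnerProductSpace ℂ U] [CompleteSpace U]
    [NormedAddCommGroup Y] [InnerProductSpace ℂ Y] [CompleteSpace Y]
    (A : Fin N → (X →L[ℂ] X)) (B : Fin N → (U →L[ℂ] X)) (C : Fin N → (X →L[ℂ] Y))
    (D : Fin N → (U →L[ℂ] Y)) : Prop :=
  ∀ ζ : Fin N → ℂ, onTorus ζ → IsUnitaryOp (pencil (sysBlock A B C D) ζ)
section cascade

variable {N : ℕ} {X1 V X2 U Y : Type*}
  [NormedAddCommGroup X1] [NormedAddCommGroup V] [NormedAddCommGroup X2]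
  [NormedAddCommGroup U] [NormedAddCommGroup Y]
  [NormedSpace ℂ X1] [NormedSpace ℂ V] [NormedSpace ℂ X2]
  [NormedSpace ℂ U] [NormedSpace ℂ Y]

/-- the main operators `A_k` of the cascade connection `α⁽²⁾α⁽¹⁾`, acting on
`X⁽²⁾ ⊕ V ⊕ X⁽¹⁾` by the block matrix `[[A⁽²⁾, B⁽²⁾, 0],[0,0,C⁽¹⁾],[0,0,A⁽¹⁾]]` -/
def cascA (A1 : Fin N → (X1 →L[ℂ] X1)) (C1 : Fin N → (X1 →L[ℂ] V))
    (A2 : Fin N → (X2 →L[ℂ] X2)) (B2 : Fin N → (V →L[ℂ] X2)) :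
    Fin N → (hS X2 (hS V X1) →L[ℂ] hS X2 (hS V X1)) := fun k =>
  block2 (A2 k) ((B2 k).comp (fstL V X1)) 0 (block2 0 (C1 k) 0 (A1 k))

/-- the input operators `B_k = col(0, D⁽¹⁾, B⁽¹⁾)` of the cascade connection -/
def cascB (B1 : Fin N → (U →L[ℂ] X1)) (D1 : Fin N → (U →L[ℂ] V)) :
    Fin N → (U →L[ℂ] hS X2 (hS V X1)) := fun k =>
  (inrL X2 (hS V X1)).comp ((inlL V X1).comp (D1 k) + (inrL V X1).comp (B1 k))

/-- the output operators `C_k = [C⁽²⁾, D⁽²⁾, 0]` of the cascade connection -/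
def cascC (C2 : Fin N → (X2 →L[ℂ] Y)) (D2 : Fin N → (V →L[ℂ] Y)) :
    Fin N → (hS X2 (hS V X1) →L[ℂ] Y) := fun k =>
  (C2 k).comp (fstL X2 (hS V X1)) + (D2 k).comp ((fstL V X1).comp (sndL X2 (hS V X1)))

/-- the external operators `D_k = 0` of the cascade connection -/
def cascD : Fin N → (U →L[ℂ] Y) := fun _ => 0

end cascade

section cc

variable {N : ℕ} {X U Y : Type*}
  [NormedAddCommGroup X] [InnerProductSpace ℂ X] [CompleteSpace X]
  [NormedAddCommGroup U] [InnerProductSpace ℂ U] [CompleteSpace U]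
  [NormedAddCommGroup Y] [InnerProductSpace ℂ Y] [CompleteSpace Y]

/-- the monomial `p(A, A*)` associated with a word `w` in the `2N` noncommuting letters
`A_1, …, A_N, A_1^*, …, A_N^*` -/
def wordOp (A : Fin N → (X →L[ℂ] X)) (w : List (Fin N × Bool)) : X →L[ℂ] X :=
  (w.map (fun p => if p.2 then A p.1 else ContinuousLinearMap.adjoint (A p.1))).prod

/-- the generating set `⋃ p(A,A*)(B_k U + C_j* Y)` of the closely connected subspace -/
def ccSet (A : Fin N → (X →L[ℂ] X)) (B : Fin N → (U →L[ℂ] X)) (C : Fin N → (X →L[ℂ] Y)) :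
    Set X :=
  {x | ∃ (w : List (Fin N × Bool)) (k : Fin N) (u : U), x = wordOp A w (B k u)} ∪
    {x | ∃ (w : List (Fin N × Bool)) (j : Fin N) (y : Y),
      x = wordOp A w ((ContinuousLinearMap.adjoint (C j)) y)}

/-- the closely connected subspace `X_cc`: the smallest closed subspace containing all
`B_k U`, `C_j^* Y` and reducing every `A_k` -/
def ccSpace (A : Fin N → (X →L[ℂ] X)) (B : Fin N → (U →L[ℂ] X)) (C : Fin N → (X →L[ℂ] Y)) :
    Submodule ℂ X :=
  (Submodule.span ℂ (ccSet A B C)).topologicalClosure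

/-- a system is closely connected if `X_cc = X` -/
def CloselyConnected (A : Fin N → (X →L[ℂ] X)) (B : Fin N → (U →L[ℂ] X))
    (C : Fin N → (X →L[ℂ] Y)) : Prop :=
  ccSpace A B C = ⊤

end cc

/-- the pencil `ζA` has a (nonzero) unitary part: some nonzero closed subspace reduces every
`A_k` and `ζA` restricts to a unitary operator on it for every `ζ ∈ 𝕋^N` -/
def HasUnitaryPart {N : ℕ} {X : Type} [NormedAddCommGroup X] [InnerProductSpace ℂ X]
    [CompleteSpace X] (A : Fin N → (X →L[ℂ] X)) : Prop :=
  ∃ S : Submodule ℂ X, S ≠ ⊥ ∧ IsClosed (S : Set X) ∧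
    (∀ k, (∀ x ∈ S, A k x ∈ S) ∧ (∀ x ∈ S, ContinuousLinearMap.adjoint (A k) x ∈ S)) ∧
    ∀ ζ : Fin N → ℂ, onTorus ζ →
      (∀ x ∈ S, ‖pencil A ζ x‖ = ‖x‖) ∧ (∀ y ∈ S, ∃ x ∈ S, pencil A ζ x = y)


namespace Stmt19Aux
open ContinuousLinearMap
set_option linter.unusedSectionVars false

variable {N : ℕ}

section basic
variable {E F X' Y' : Type*} [NormedAddCommGroup E] [NormedAddCommGroup F]
  [NormedAddCommGroup X'] [NormedAddCommGroup Y']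
  [NormedSpace ℂ E] [NormedSpace ℂ F] [NormedSpace ℂ X'] [NormedSpace ℂ Y']

lemma pencil_apply' (T : Fin N → (E →L[ℂ] F)) (z : Fin N → ℂ) (x : E) :
    pencil T z x = ∑ k, z k • T k x := by
  simp [pencil]

lemma pencil_vanish (T : Fin N → (E →L[ℂ] F)) (x : E)
    (h : ∀ ζ : Fin N → ℂ, onTorus ζ → pencil T ζ x = 0) (k : Fin N) : T k x = 0 := by
  have h1 := h (fun _ => 1) (fun _ => by norm_num)
  have h2 := h (fun j => if j = k then -1 else 1) (fun j => by dsimp only; split <;> norm_num)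
  rw [pencil_apply'] at h1 h2
  simp only [one_smul] at h1
  have e : ∀ j : Fin N, ((if j = k then (-1 : ℂ) else 1) • T j x)
      = T j x - (if j = k then (2 : ℂ) • T k x else 0) := by
    intro j
    by_cases hj : j = k
    · rw [if_pos hj, if_pos hj, hj]; module
    · rw [if_neg hj, if_neg hj]; simp
  rw [Finset.sum_congr rfl (fun j _ => e j), Finset.sum_sub_distrib, h1,
    Finset.sum_ite_eq' Finset.univ k] at h2
  simp only [Finset.mem_univ, if_true, zero_sub, neg_eq_zero] at h2
  have h20 : (2 : ℂ) ≠ 0 := by norm_num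
  simpa [h20] using h2

lemma pencil_mem {S : Submodule ℂ E} {T : Fin N → E →L[ℂ] E}
    (hT : ∀ k, ∀ x ∈ S, T k x ∈ S) (z : Fin N → ℂ) {x : E} (hx : x ∈ S) :
    pencil T z x ∈ S := by
  rw [pencil_apply']
  exact Submodule.sum_mem _ fun k _ => Submodule.smul_mem _ _ (hT k x hx)

lemma block2_apply (A : E →L[ℂ] X') (B : F →L[ℂ] X') (C : E →L[ℂ] Y') (D : F →L[ℂ] Y')
    (v : hS E F) :
    block2 A B C D v
      = (WithLp.equiv 2 (X' × Y')).symm (A v.fst + B v.snd, C v.fst + D v.snd) := by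
  apply (WithLp.equiv 2 _).injective
  apply Prod.ext <;> simp [block2, inlL, inrL, fstL, sndL]

end basic

section hilb
variable {E F : Type*} [NormedAddCommGroup E] [InnerProductSpace ℂ E] [CompleteSpace E]
  [NormedAddCommGroup F] [InnerProductSpace ℂ F] [CompleteSpace F]

lemma adjoint_smul' (T : E →L[ℂ] F) (c : ℂ) :
    adjoint (c • T) = (starRingEnd ℂ c) • adjoint T := by
  ext x
  apply ext_inner_left ℂ
  intro v
  simp [adjoint_inner_right, adjoint_inner_left, inner_smul_left, inner_smul_right]

lemma adjoint_pencil (T : Fin N → (E →L[ℂ] F)) (z : Fin N → ℂ) :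
    adjoint (pencil T z)
      = pencil (fun k => adjoint (T k)) (fun k => starRingEnd ℂ (z k)) := by
  simp [pencil, map_sum, adjoint_smul']

end hilb

lemma norm_eq_of_sq_add {a b c : ℝ} (ha : 0 ≤ a) (hc : 0 ≤ c)
    (h : a ^ 2 + b ^ 2 = c ^ 2) (hb : b = 0) : a = c := by
  rw [hb] at h
  simp at h
  rw [← Real.sqrt_sq ha, ← Real.sqrt_sq hc, h]

lemma vanish_of_sq_add {E : Type*} [NormedAddCommGroup E] {a c : ℝ} {v : E}
    (h : a ^ 2 + ‖v‖ ^ 2 = c ^ 2) (hac : a = c) : v = 0 := by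
  subst hac
  have h1 : ‖v‖ ^ 2 = 0 := by linarith
  have h2 := pow_eq_zero_iff (n := 2) (by norm_num) |>.mp h1
  simpa using h2

section word
variable {X U Y : Type*}
  [NormedAddCommGroup X] [InnerProductSpace ℂ X] [CompleteSpace X]
  [NormedAddCommGroup U] [InnerProductSpace ℂ U] [CompleteSpace U]
  [NormedAddCommGroup Y] [InnerProductSpace ℂ Y] [CompleteSpace Y]
  (A : Fin N → (X →L[ℂ] X)) (B : Fin N → (U →L[ℂ] X)) (C : Fin N → (X →L[ℂ] Y))
  (D : Fin N → (U →L[ℂ] Y))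

lemma wordOp_cons (p : Fin N × Bool) (w : List (Fin N × Bool)) :
    wordOp A (p :: w) = (if p.2 then A p.1 else adjoint (A p.1)).comp (wordOp A w) := by
  simp only [wordOp, List.map_cons, List.prod_cons]
  rfl

lemma adjoint_wordOp_mem {S : Submodule ℂ X}
    (hred : ∀ k, (∀ x ∈ S, A k x ∈ S) ∧ (∀ x ∈ S, adjoint (A k) x ∈ S))
    (w : List (Fin N × Bool)) : ∀ x ∈ S, adjoint (wordOp A w) x ∈ S := by
  induction w with
  | nil =>
    intro x hx
    have h1 : wordOp A ([] : List (Fin N × Bool)) = ContinuousLinearMap.id ℂ X := rfl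
    rw [h1, adjoint_id]
    simpa using hx
  | cons p w ih =>
    intro x hx
    rw [wordOp_cons, adjoint_comp]
    refine ih _ ?_
    by_cases hp : p.2
    · simpa [hp] using (hred p.1).2 x hx
    · simpa [hp, adjoint_adjoint] using (hred p.1).1 x hx

lemma ccSet_opA (k : Fin N) (b : Bool) {g : X} (hg : g ∈ ccSet A B C) :
    (if b then A k else adjoint (A k)) g ∈ ccSet A B C := by
  rcases hg with ⟨w, j, u, rfl⟩ | ⟨w, j, y, rfl⟩
  · exact Or.inl ⟨(k, b) :: w, j, u, by rw [wordOp_cons]; rfl⟩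
  · exact Or.inr ⟨(k, b) :: w, j, y, by rw [wordOp_cons]; rfl⟩

lemma ccSpace_inv {T : X →L[ℂ] X} (hT : ∀ g ∈ ccSet A B C, T g ∈ ccSet A B C) :
    ∀ x ∈ ccSpace A B C, T x ∈ ccSpace A B C := by
  intro x hx
  have h1 : Submodule.map (T : X →ₗ[ℂ] X) (Submodule.span ℂ (ccSet A B C))
      ≤ Submodule.span ℂ (ccSet A B C) := by
    rw [Submodule.map_span]
    refine Submodule.span_le.mpr ?_
    rintro y ⟨g, hg, rfl⟩
    exact Submodule.subset_span (hT g hg)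
  have h2 := Submodule.topologicalClosure_map T (Submodule.span ℂ (ccSet A B C))
  have h3 : T x ∈ (Submodule.map (T : X →ₗ[ℂ] X)
      (Submodule.span ℂ (ccSet A B C))).topologicalClosure :=
    h2 ⟨x, hx, rfl⟩
  exact Submodule.topologicalClosure_mono h1 h3

lemma G_apply (ζ : Fin N → ℂ) (v : hS X U) :
    pencil (sysBlock A B C D) ζ v
      = (WithLp.equiv 2 (X × Y)).symm
          (pencil A ζ v.fst + pencil B ζ v.snd, pencil C ζ v.fst + pencil D ζ v.snd) := by
  calc pencil (sysBlock A B C D) ζ v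
      = ∑ k, ζ k • (WithLp.linearEquiv 2 ℂ (X × Y)).symm
          ((A k) v.fst + (B k) v.snd, (C k) v.fst + (D k) v.snd) := by
        simp [pencil_apply', sysBlock, block2_apply, WithLp.linearEquiv_symm_apply]
    _ = (WithLp.linearEquiv 2 ℂ (X × Y)).symm
          (∑ k, ζ k • ((A k) v.fst + (B k) v.snd, (C k) v.fst + (D k) v.snd)) := by
        rw [map_sum]
        exact Finset.sum_congr rfl fun k _ => (map_smul _ _ _).symm
    _ = _ := by
        rw [WithLp.linearEquiv_symm_apply]
        refine congrArg (WithLp.toLp 2) ?_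
        apply Prod.ext <;>
          simp [pencil_apply', Prod.fst_sum, Prod.snd_sum, Finset.sum_add_distrib, smul_add]

lemma Gadj_inl (ζ : Fin N → ℂ) (x : X) :
    ContinuousLinearMap.adjoint (pencil (sysBlock A B C D) ζ)
        ((WithLp.equiv 2 (X × Y)).symm (x, 0))
      = (WithLp.equiv 2 (X × U)).symm
          (ContinuousLinearMap.adjoint (pencil A ζ) x,
           ContinuousLinearMap.adjoint (pencil B ζ) x) := by
  apply ext_inner_left ℂ
  intro v
  rw [ContinuousLinearMap.adjoint_inner_right, G_apply]
  simp only [WithLp.prod_inner_apply, WithLp.equiv_symm_apply, WithLp.ofLp_toLp,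
    inner_zero_right, add_zero, inner_add_left, ContinuousLinearMap.adjoint_inner_right]
  rfl

variable {A B C D} in
lemma unit_facts {ζ : Fin N → ℂ} (h : IsUnitaryOp (pencil (sysBlock A B C D) ζ)) :
    (∀ x : X, ‖pencil A ζ x‖ ^ 2 + ‖pencil C ζ x‖ ^ 2 = ‖x‖ ^ 2)
    ∧ (∀ x : X, ‖ContinuousLinearMap.adjoint (pencil A ζ) x‖ ^ 2
        + ‖ContinuousLinearMap.adjoint (pencil B ζ) x‖ ^ 2 = ‖x‖ ^ 2)
    ∧ (∀ x : X, pencil A ζ (ContinuousLinearMap.adjoint (pencil A ζ) x)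
        + pencil B ζ (ContinuousLinearMap.adjoint (pencil B ζ) x) = x) := by
  set G := pencil (sysBlock A B C D) ζ with hG
  have h1 : ∀ v, ContinuousLinearMap.adjoint G (G v) = v := by
    intro v
    have := congrArg (fun T => T v) h.1
    simpa using this
  have h2 : ∀ v, G (ContinuousLinearMap.adjoint G v) = v := by
    intro v
    have := congrArg (fun T => T v) h.2
    simpa using this
  refine ⟨?_, ?_, ?_⟩
  · intro x
    have key : (inner ℂ (G ((WithLp.equiv 2 (X × U)).symm (x, 0)))
        (G ((WithLp.equiv 2 (X × U)).symm (x, 0))) : ℂ)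
        = inner ℂ ((WithLp.equiv 2 (X × U)).symm (x, 0) : hS X U)
            ((WithLp.equiv 2 (X × U)).symm (x, 0)) := by
      rw [← ContinuousLinearMap.adjoint_inner_right, h1]
    rw [hG, G_apply] at key
    simp only [WithLp.prod_inner_apply, WithLp.equiv_symm_apply, WithLp.ofLp_toLp,
      WithLp.toLp_fst, WithLp.toLp_snd, map_zero, add_zero, inner_zero_right] at key
    rw [inner_self_eq_norm_sq_to_K, inner_self_eq_norm_sq_to_K,
      inner_self_eq_norm_sq_to_K] at key
    exact_mod_cast key
  · intro x
    have key : (inner ℂ (ContinuousLinearMap.adjoint G ((WithLp.equiv 2 (X × Y)).symm (x, 0)))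
        (ContinuousLinearMap.adjoint G ((WithLp.equiv 2 (X × Y)).symm (x, 0))) : ℂ)
        = inner ℂ ((WithLp.equiv 2 (X × Y)).symm (x, 0) : hS X Y)
            ((WithLp.equiv 2 (X × Y)).symm (x, 0)) := by
      rw [← ContinuousLinearMap.adjoint_inner_left, ContinuousLinearMap.adjoint_adjoint, h2]
    rw [hG, Gadj_inl] at key
    simp only [WithLp.prod_inner_apply, WithLp.equiv_symm_apply, WithLp.ofLp_toLp,
      inner_zero_right, add_zero] at key
    rw [inner_self_eq_norm_sq_to_K, inner_self_eq_norm_sq_to_K,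
      inner_self_eq_norm_sq_to_K] at key
    exact_mod_cast key
  · intro x
    have key := h2 ((WithLp.equiv 2 (X × Y)).symm (x, 0))
    rw [hG, Gadj_inl, G_apply] at key
    have key2 := congrArg (fun t : hS X Y => t.fst) key
    simpa using key2

end word
end Stmt19Aux

/-- for a conservative scattering system, the `N`-tuple of main operators is
completely non-unitary in the pencil sense iff the system is closely connected. -/
theorem completely_nonunitary_iff_closely_connected {N : ℕ} {X U Y : Type}
    [NormedAddCommGroup X] [InnerProductSpace ℂ X] [CompleteSpace X]
    [TopologicalSpace.SeparableSpace X]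
    [NormedAddCommGroup U] [InnerProductSpace ℂ U] [CompleteSpace U]
    [TopologicalSpace.SeparableSpace U]
    [NormedAddCommGroup Y] [InnerProductSpace ℂ Y] [CompleteSpace Y]
    [TopologicalSpace.SeparableSpace Y]
    (A : Fin N → (X →L[ℂ] X)) (B : Fin N → (U →L[ℂ] X)) (C : Fin N → (X →L[ℂ] Y))
    (D : Fin N → (U →L[ℂ] Y))
    (hcontr : ∀ ζ : Fin N → ℂ, onTorus ζ → ‖pencil A ζ‖ ≤ 1)
    (hcons : Conservative A B C D) :
    (¬ HasUnitaryPart A) ↔ CloselyConnected A B C := by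
  classical
  open ContinuousLinearMap Stmt19Aux in
  constructor
  · -- ¬ HasUnitaryPart → CloselyConnected
    intro hnu
    by_contra hncc
    apply hnu
    set K := ccSpace A B C with hK
    have hKcl : IsClosed (K : Set X) := Submodule.isClosed_topologicalClosure _
    haveI : CompleteSpace K := hKcl.completeSpace_coe
    have hKA : ∀ k, ∀ u ∈ K, A k u ∈ K := fun k =>
      ccSpace_inv A B C (fun g hg => by simpa using ccSet_opA A B C k true hg)
    have hKA' : ∀ k, ∀ u ∈ K, ContinuousLinearMap.adjoint (A k) u ∈ K := fun k =>
      ccSpace_inv A B C (fun g hg => by simpa using ccSet_opA A B C k false hg)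
    have hred : ∀ k, (∀ x ∈ Kᗮ, A k x ∈ Kᗮ) ∧
        (∀ x ∈ Kᗮ, ContinuousLinearMap.adjoint (A k) x ∈ Kᗮ) := by
      intro k
      constructor
      · intro x hx
        rw [Submodule.mem_orthogonal]
        intro u hu
        rw [← ContinuousLinearMap.adjoint_inner_left]
        exact (Submodule.mem_orthogonal _ _).mp hx _ (hKA' k u hu)
      · intro x hx
        rw [Submodule.mem_orthogonal]
        intro u hu
        rw [ContinuousLinearMap.adjoint_inner_right]
        exact (Submodule.mem_orthogonal _ _).mp hx _ (hKA k u hu)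
    have hBzero : ∀ x ∈ Kᗮ, ∀ k, ContinuousLinearMap.adjoint (B k) x = 0 := by
      intro x hx k
      have h0 : ∀ u : U, (inner ℂ u (ContinuousLinearMap.adjoint (B k) x) : ℂ) = 0 := by
        intro u
        rw [ContinuousLinearMap.adjoint_inner_right]
        refine (Submodule.mem_orthogonal _ _).mp hx _ ?_
        exact Submodule.le_topologicalClosure _
          (Submodule.subset_span (Or.inl ⟨[], k, u, rfl⟩))
      have h1 := h0 (ContinuousLinearMap.adjoint (B k) x)
      rwa [inner_self_eq_zero] at h1
    have hCzero : ∀ x ∈ Kᗮ, ∀ j, C j x = 0 := by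
      intro x hx j
      have h0 : ∀ y : Y, (inner ℂ y (C j x) : ℂ) = 0 := by
        intro y
        rw [← ContinuousLinearMap.adjoint_inner_left]
        refine (Submodule.mem_orthogonal _ _).mp hx _ ?_
        exact Submodule.le_topologicalClosure _
          (Submodule.subset_span (Or.inr ⟨[], j, y, rfl⟩))
      have h1 := h0 (C j x)
      rwa [inner_self_eq_zero] at h1
    refine ⟨Kᗮ, ?_, Submodule.isClosed_orthogonal K, hred, ?_⟩
    · intro hbot
      exact hncc (Submodule.orthogonal_eq_bot_iff.mp hbot)
    · intro ζ hζ
      constructor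
      · intro x hx
        have h1 := (unit_facts (hcons ζ hζ)).1 x
        have hC : pencil C ζ x = 0 := by
          rw [pencil_apply']
          simp [hCzero x hx]
        exact norm_eq_of_sq_add (norm_nonneg _) (norm_nonneg _) h1 (by rw [hC, norm_zero])
      · intro y hy
        refine ⟨ContinuousLinearMap.adjoint (pencil A ζ) y, ?_, ?_⟩
        · rw [adjoint_pencil]
          exact pencil_mem (fun k => (hred k).2) _ hy
        · have h3 := (unit_facts (hcons ζ hζ)).2.2 y
          have hB' : ContinuousLinearMap.adjoint (pencil B ζ) y = 0 := by
            rw [adjoint_pencil, pencil_apply']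
            simp [hBzero y hy]
          rw [hB'] at h3
          simpa using h3
  · -- CloselyConnected → ¬ HasUnitaryPart
    intro hcc hup
    obtain ⟨S, hSne, hScl, hred, huni⟩ := hup
    have hip : ∀ ζ : Fin N → ℂ, onTorus ζ → ∀ a ∈ S, ∀ b ∈ S,
        (inner ℂ (pencil A ζ a) (pencil A ζ b) : ℂ) = inner ℂ a b := by
      intro ζ hζ a ha b hb
      let f : S →ₗᵢ[ℂ] X :=
        ⟨((pencil A ζ) : X →ₗ[ℂ] X).comp S.subtype, fun s => (huni ζ hζ).1 s s.2⟩
      have hf := f.inner_map_map (⟨a, ha⟩ : S) (⟨b, hb⟩ : S)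
      exact hf
    have hA'mem : ∀ (ζ : Fin N → ℂ) (x : X), x ∈ S →
        ContinuousLinearMap.adjoint (pencil A ζ) x ∈ S := by
      intro ζ x hx
      rw [adjoint_pencil]
      exact pencil_mem (fun k => (hred k).2) _ hx
    have hA'iso : ∀ ζ : Fin N → ℂ, onTorus ζ → ∀ s ∈ S,
        ‖ContinuousLinearMap.adjoint (pencil A ζ) s‖ = ‖s‖ := by
      intro ζ hζ s hs
      obtain ⟨t, ht, hts⟩ := (huni ζ hζ).2 s hs
      have hA's : ContinuousLinearMap.adjoint (pencil A ζ) s ∈ S := hA'mem ζ s hs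
      have hd : ContinuousLinearMap.adjoint (pencil A ζ) s - t ∈ S :=
        Submodule.sub_mem _ hA's ht
      have hzero : ∀ u ∈ S,
          (inner ℂ u (ContinuousLinearMap.adjoint (pencil A ζ) s - t) : ℂ) = 0 := by
        intro u hu
        rw [inner_sub_right, ContinuousLinearMap.adjoint_inner_right, ← hts,
          hip ζ hζ u hu t ht, sub_self]
      have heq : ContinuousLinearMap.adjoint (pencil A ζ) s = t := by
        have h0 := hzero _ hd
        rw [inner_self_eq_zero, sub_eq_zero] at h0
        exact h0
      rw [heq, ← hts]
      exact ((huni ζ hζ).1 t ht).symm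
    have hCzero : ∀ s ∈ S, ∀ j, C j s = 0 := by
      intro s hs j
      refine pencil_vanish C s ?_ j
      intro ζ hζ
      exact vanish_of_sq_add ((unit_facts (hcons ζ hζ)).1 s) ((huni ζ hζ).1 s hs)
    have hBzero : ∀ s ∈ S, ∀ k, ContinuousLinearMap.adjoint (B k) s = 0 := by
      intro s hs k
      refine pencil_vanish (fun k => ContinuousLinearMap.adjoint (B k)) s ?_ k
      intro ξ hξ
      have hζ : onTorus (fun k => starRingEnd ℂ (ξ k)) := by
        intro k
        simpa using hξ k
      have h2 := (unit_facts (hcons _ hζ)).2.1 s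
      have h3 := vanish_of_sq_add h2 (hA'iso _ hζ s hs)
      rw [adjoint_pencil] at h3
      simpa using h3
    obtain ⟨s, hsS, hsne⟩ := Submodule.ne_bot_iff S |>.mp hSne
    have horth : ∀ g ∈ ccSet A B C, (inner ℂ g s : ℂ) = 0 := by
      rintro g (⟨w, k, u, rfl⟩ | ⟨w, j, y, rfl⟩)
      · have hw : ContinuousLinearMap.adjoint (wordOp A w) s ∈ S :=
          adjoint_wordOp_mem A hred w s hsS
        calc (inner ℂ (wordOp A w (B k u)) s : ℂ)
            = inner ℂ (B k u) (ContinuousLinearMap.adjoint (wordOp A w) s) :=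
              (ContinuousLinearMap.adjoint_inner_right (wordOp A w) (B k u) s).symm
          _ = inner ℂ u (ContinuousLinearMap.adjoint (B k)
                (ContinuousLinearMap.adjoint (wordOp A w) s)) :=
              (ContinuousLinearMap.adjoint_inner_right (B k) u _).symm
          _ = 0 := by rw [hBzero _ hw k, inner_zero_right]
      · have hw : ContinuousLinearMap.adjoint (wordOp A w) s ∈ S :=
          adjoint_wordOp_mem A hred w s hsS
        calc (inner ℂ (wordOp A w (ContinuousLinearMap.adjoint (C j) y)) s : ℂ)
            = inner ℂ (ContinuousLinearMap.adjoint (C j) y)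
                (ContinuousLinearMap.adjoint (wordOp A w) s) :=
              (ContinuousLinearMap.adjoint_inner_right (wordOp A w) _ s).symm
          _ = inner ℂ y (C j (ContinuousLinearMap.adjoint (wordOp A w) s)) :=
              ContinuousLinearMap.adjoint_inner_left (C j) _ _
          _ = 0 := by rw [hCzero _ hw j, inner_zero_right]
    have hspan : ∀ g ∈ Submodule.span ℂ (ccSet A B C), (inner ℂ g s : ℂ) = 0 := by
      intro g hg
      induction hg using Submodule.span_induction with
      | mem x hx => exact horth x hx
      | zero => simp
      | add x y _ _ hx hy => rw [inner_add_left, hx, hy, add_zero]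
      | smul c x _ hx => rw [inner_smul_left, hx, mul_zero]
    have hdense : Dense ((Submodule.span ℂ (ccSet A B C) : Submodule ℂ X) : Set X) := by
      rw [Submodule.dense_iff_topologicalClosure_eq_top]
      exact hcc
    have hall : (inner ℂ s s : ℂ) = 0 := by
      have hclosed : IsClosed {g : X | (inner ℂ g s : ℂ) = 0} :=
        isClosed_eq (Continuous.inner continuous_id continuous_const) continuous_const
      have hsub : ((Submodule.span ℂ (ccSet A B C) : Submodule ℂ X) : Set X)
          ⊆ {g : X | (inner ℂ g s : ℂ) = 0} := fun g hg => hspan g hg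
      exact closure_minimal hsub hclosed (hdense s)
    exact hsne (inner_self_eq_zero.mp hall)
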